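/- Let G be a simple graph on n vertices with maximum degree at most d, where d ≥ 1, and let (B_v) be a family of measurable events, one per vertex, in a probability space. Suppose that P(B_v) ≤ p for every vertex v, and that for every vertex set W whose pairwise G-distances are all at least 3 one has P(⋂_{v∈W} B_v) ≤ ∏_{v∈W} P(B_v). Then for every integer w ≥ 1, the probability that there exists a 3-tree W in G of size w such that B_v occurs for every v ∈ W is at most n·(4d³·p)^w. -/

import Mathlib

open MeasureTheory
open scoped ENNReal

/-- The auxiliary graph on a vertex set `W`, joining two vertices of `W` when their
distance in `G` is exactly `3`. -/
def distThreeGraph {V : Type*} (G : SimpleGraph V) (W : Finset V) :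
    SimpleGraph {x // x ∈ W} :=
  SimpleGraph.fromRel (fun a b => G.dist a.1 b.1 = 3)

/-- `W` is a *3-tree* in `G`: the pairwise distances of the vertices of `W` are all at
least `3`, and the auxiliary graph joining vertices of `W` at distance exactly `3`
is connected. -/
def IsThreeTree {V : Type*} (G : SimpleGraph V) (W : Finset V) : Prop :=
  (∀ u ∈ W, ∀ v ∈ W, u ≠ v → 3 ≤ G.edist u v) ∧ (distThreeGraph G W).Connected

namespace ThreeTreeAux

/-- Labelled binary codes: binary trees whose nodes carry a label in `Fin D`. -/
inductive LTree (D : ℕ) : Type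
  | leaf : LTree D
  | node : Fin D → LTree D → LTree D → LTree D

namespace LTree

variable {D : ℕ}

def numNodes : LTree D → ℕ
  | leaf => 0
  | node _ c s => c.numNodes + s.numNodes + 1

def shape : LTree D → Tree Unit
  | leaf => Tree.nil
  | node _ c s => Tree.node () c.shape s.shape

def labels : LTree D → List (Fin D)
  | leaf => []
  | node i c s => i :: (c.labels ++ s.labels)

lemma shape_numNodes : ∀ t : LTree D, t.shape.numNodes = t.numNodes
  | leaf => rfl
  | node _ c s => by
      simp [shape, numNodes, Tree.numNodes, shape_numNodes c, shape_numNodes s]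

lemma labels_length : ∀ t : LTree D, t.labels.length = t.numNodes
  | leaf => rfl
  | node _ c s => by
      simp [labels, numNodes, labels_length c, labels_length s]

lemma eq_of_shape_of_labels : ∀ {t₁ t₂ : LTree D}, t₁.shape = t₂.shape →
    t₁.labels = t₂.labels → t₁ = t₂
  | leaf, leaf, _, _ => rfl
  | leaf, node .., h, _ => by simp [shape] at h
  | node .., leaf, h, _ => by simp [shape] at h
  | node i c s, node i' c' s', hs, hl => by
      simp only [shape, Tree.node, BinaryTree.node.injEq, true_and] at hs
      simp only [labels, List.cons.injEq] at hl
      obtain ⟨hc, hs'⟩ := hs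
      obtain ⟨hi, hl⟩ := hl
      have hlen : c.labels.length = c'.labels.length := by
        rw [labels_length, labels_length, ← shape_numNodes, ← shape_numNodes, hc]
      obtain ⟨h1, h2⟩ := List.append_inj hl hlen
      rw [hi, eq_of_shape_of_labels hc h1, eq_of_shape_of_labels hs' h2]

variable {V : Type*} [DecidableEq V]

def decode (e : V → Fin D → V) : LTree D → V → Finset V
  | leaf, _ => ∅
  | node i c s, r => insert (e r i) (decode e c (e r i) ∪ decode e s r)

lemma graft (e : V → Fin D → V) (i : Fin D) (v : V) :
    ∀ (t : LTree D) (r u : V), u ∈ decode e t r → e u i = v →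
    ∃ t' : LTree D, t'.numNodes = t.numNodes + 1 ∧
      decode e t' r = insert v (decode e t r)
  | leaf, r, u, hu, _ => by simp [decode] at hu
  | node j c s, r, u, hu, hv => by
    simp only [decode, Finset.mem_insert, Finset.mem_union] at hu
    rcases hu with hu | hu | hu
    · refine ⟨node j (node i leaf c) s, by simp [numNodes]; omega, ?_⟩
      subst hu
      simp only [decode]
      rw [← hv]
      ext a
      simp only [Finset.mem_insert, Finset.mem_union, Finset.notMem_empty, false_or]
      tauto
    · obtain ⟨c', hn, hd⟩ := graft e i v c (e r j) u hu hv
      refine ⟨node j c' s, by simp [numNodes]; omega, ?_⟩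
      simp only [decode, hd]
      ext a
      simp only [Finset.mem_insert, Finset.mem_union]
      tauto
    · obtain ⟨s', hn, hd⟩ := graft e i v s r u hu hv
      refine ⟨node j c s', by simp [numNodes]; omega, ?_⟩
      simp only [decode, hd]
      ext a
      simp only [Finset.mem_insert, Finset.mem_union]
      tauto

lemma graft' (e : V → Fin D → V) (i : Fin D) (v : V) (t : LTree D) (r u : V)
    (hu : u ∈ insert r (decode e t r)) (hv : e u i = v) :
    ∃ t' : LTree D, t'.numNodes = t.numNodes + 1 ∧
      insert r (decode e t' r) = insert v (insert r (decode e t r)) := by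
  rcases Finset.mem_insert.1 hu with rfl | hu
  · refine ⟨node i leaf t, by simp [numNodes], ?_⟩
    simp only [decode, hv]
    ext a
    simp only [Finset.mem_insert, Finset.mem_union, Finset.notMem_empty, false_or]
    tauto
  · obtain ⟨t', hn, hd⟩ := graft e i v t r u hu hv
    refine ⟨t', hn, ?_⟩
    rw [hd]
    ext a
    simp only [Finset.mem_insert]
    tauto

end LTree

variable {V : Type*}

/-- Reflexive-transitive closure with an explicit step count. -/
inductive RTC (R : V → V → Prop) (r : V) : V → ℕ → Prop
  | refl : RTC R r r 0
  | tail {u v n} : RTC R r u n → R u v → RTC R r v (n + 1)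

lemma RTC.mono {R R' : V → V → Prop} {r : V} (h : ∀ a b, R a b → R' a b) :
    ∀ {u n}, RTC R r u n → RTC R' r u n := by
  intro u n hu
  induction hu with
  | refl => exact .refl
  | tail _ hstep ih => exact .tail ih (h _ _ hstep)

lemma RTC.mem {R : V → V → Prop} {r : V} {W : Finset V}
    (hR : ∀ a b, R a b → b ∈ W) (hr : r ∈ W) :
    ∀ {u n}, RTC R r u n → u ∈ W := by
  intro u n hu
  induction hu with
  | refl => exact hr
  | tail _ hstep _ => exact hR _ _ hstep

lemma RTC.head {R : V → V → Prop} {r u : V} (h : R r u) :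
    ∀ {x n}, RTC R u x n → RTC R r x (n + 1) := by
  intro x n hx
  induction hx with
  | refl => exact .tail .refl h
  | tail _ hstep ih => exact .tail ih hstep

lemma RTC.exists_pred {R : V → V → Prop} {r : V} :
    ∀ {u n}, RTC R r u n → u = r ∨ ∃ u' n', RTC R r u' n' ∧ R u' u := by
  intro u n hu
  induction hu with
  | refl => exact Or.inl rfl
  | tail h' hstep _ => exact Or.inr ⟨_, _, h', hstep⟩

lemma RTC.avoid {R : V → V → Prop} {r v : V} {dv : ℕ}
    (hv : ∀ n u, RTC R r u n → u = v → dv ≤ n) :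
    ∀ {u n}, RTC R r u n → u ≠ v → n ≤ dv →
      RTC (fun a b => b ≠ v ∧ R a b) r u n := by
  intro u n hu
  induction hu with
  | refl => intro _ _; exact .refl
  | @tail u' v' n' h' hstep ih =>
    intro hne hle
    have hu'v : u' ≠ v := by
      intro h
      exact absurd (hv n' u' h' h) (by omega)
    exact .tail (ih hu'v (by omega)) ⟨hne, hstep⟩

variable [DecidableEq V]

lemma encode_exists {D : ℕ} (e : V → Fin D → V) (A : V → V → Prop)
    (hcov : ∀ u v, A u v → ∃ i, e u i = v) (hirr : ∀ u, ¬ A u u) :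
    ∀ (m : ℕ) (W : Finset V) (r : V), r ∈ W → W.card = m + 1 →
      (∀ u ∈ W, ∃ n, RTC (fun a b => b ∈ W ∧ A a b) r u n) →
      ∃ t : LTree D, t.numNodes = m ∧ insert r (LTree.decode e t r) = W := by
  intro m
  induction m with
  | zero =>
    intro W r hr hc _
    refine ⟨.leaf, rfl, ?_⟩
    obtain ⟨a, rfl⟩ := Finset.card_eq_one.1 hc
    obtain rfl := Finset.mem_singleton.1 hr
    simp [LTree.decode]
  | succ m ih =>
    intro W r hr hc hconn
    set R := fun a b => b ∈ W ∧ A a b with hR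
    have hmem : ∀ {u n}, RTC R r u n → u ∈ W := fun {u n} h =>
      RTC.mem (fun a b hab => hab.1) hr h
    set d : V → ℕ := fun u => sInf {n | RTC R r u n} with hd
    have hdm : ∀ u ∈ W, RTC R r u (d u) := fun u hu => Nat.sInf_mem (hconn u hu)
    have hdle : ∀ u n, RTC R r u n → d u ≤ n := fun u n h => Nat.sInf_le h
    have hne : (W.erase r).Nonempty := by
      rw [← Finset.card_pos, Finset.card_erase_of_mem hr, hc]; omega
    obtain ⟨v, hvmem, hvmax⟩ := Finset.exists_max_image (W.erase r) d hne
    have hvW : v ∈ W := Finset.mem_of_mem_erase hvmem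
    have hvr : v ≠ r := Finset.ne_of_mem_erase hvmem
    obtain ⟨u0, n0, hchain0, hu0⟩ :
        ∃ u0 n0, RTC R r u0 n0 ∧ R u0 v := by
      rcases (hdm v hvW).exists_pred with h | h
      · exact absurd h hvr
      · exact h
    have hu0W : u0 ∈ W := hmem hchain0
    have hu0v : u0 ≠ v := fun h => hirr v (h ▸ hu0.2)
    set W' := W.erase v with hW'
    have hr' : r ∈ W' := Finset.mem_erase.2 ⟨hvr.symm, hr⟩
    have hc' : W'.card = m + 1 := by
      rw [hW', Finset.card_erase_of_mem hvW, hc]; omega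
    have hconn' : ∀ u ∈ W', ∃ n, RTC (fun a b => b ∈ W' ∧ A a b) r u n := by
      intro u hu
      have huW : u ∈ W := Finset.mem_of_mem_erase hu
      have huv : u ≠ v := Finset.ne_of_mem_erase hu
      have hdud : d u ≤ d v := by
        rcases eq_or_ne u r with rfl | hur
        · exact le_trans (hdle _ 0 .refl) (Nat.zero_le _)
        · exact hvmax u (Finset.mem_erase.2 ⟨hur, huW⟩)
      have havoid := RTC.avoid (r := r) (v := v) (dv := d v)
        (fun n x hx hxv => hdle v n (hxv ▸ hx)) (hdm u huW) huv hdud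
      exact ⟨d u, havoid.mono (fun a b hab =>
        ⟨Finset.mem_erase.2 ⟨hab.1, hab.2.1⟩, hab.2.2⟩)⟩
    obtain ⟨t, htn, htW⟩ := ih W' r hr' hc' hconn'
    have hu0' : u0 ∈ insert r (LTree.decode e t r) := by
      rw [htW]; exact Finset.mem_erase.2 ⟨hu0v, hu0W⟩
    obtain ⟨i, hi⟩ := hcov u0 v hu0.2
    obtain ⟨t', htn', htW'⟩ := LTree.graft' e i v t r u0 hu0' hi
    exact ⟨t', by omega, by rw [htW', htW, Finset.insert_erase hvW]⟩

lemma catalan_le_four_pow (m : ℕ) : catalan m ≤ 4 ^ m := by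
  rw [catalan_eq_centralBinom_div]
  refine le_trans (Nat.div_le_self _ _) ?_
  have h1 : Nat.centralBinom m ≤ 2 ^ (2 * m) := by
    rw [Nat.centralBinom_eq_two_mul_choose, ← Nat.sum_range_choose (2 * m)]
    exact Finset.single_le_sum (f := fun i => (2 * m).choose i)
      (fun i _ => Nat.zero_le _) (Finset.mem_range.2 (by omega))
  calc Nat.centralBinom m ≤ 2 ^ (2 * m) := h1
    _ = 4 ^ m := by rw [pow_mul]; norm_num

/-- The number of connected vertex sets of size `m+1` in a graph of maximum degree
at most `D` is at most `|V| · 4^m · D^m`. -/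
lemma count_le {V : Type*} [Fintype V] [DecidableEq V]
    (A : V → V → Prop) (hirr : ∀ u, ¬ A u u) (D : ℕ) (hD : 1 ≤ D)
    (hdeg : ∀ v : V, ∃ s : Finset V, (∀ u, A v u → u ∈ s) ∧ s.card ≤ D)
    (m : ℕ) (𝒲 : Finset (Finset V))
    (h𝒲 : ∀ W ∈ 𝒲, W.card = m + 1 ∧
      ∀ r ∈ W, ∀ u ∈ W, ∃ n, RTC (fun a b => b ∈ W ∧ A a b) r u n) :
    𝒲.card ≤ Fintype.card V * (4 ^ m * D ^ m) := by
  classical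
  set e : V → Fin D → V := fun v i => ((hdeg v).choose.toList.getD i v) with he
  have hcov : ∀ u v, A u v → ∃ i : Fin D, e u i = v := by
    intro u v huv
    have hv : v ∈ (hdeg u).choose.toList := by
      rw [Finset.mem_toList]; exact (hdeg u).choose_spec.1 v huv
    obtain ⟨j, hj, hget⟩ := List.getElem_of_mem hv
    have hjD : j < D := lt_of_lt_of_le
      (by simpa [Finset.length_toList] using hj) (hdeg u).choose_spec.2
    refine ⟨⟨j, hjD⟩, ?_⟩
    rw [he]
    simp only
    rw [List.getD_eq_getElem _ _ hj]
    exact hget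
  have hsub : 𝒲 ⊆ Finset.univ.biUnion
      (fun r => 𝒲.filter (fun W => r ∈ W)) := by
    intro W hW
    have hcard := (h𝒲 W hW).1
    obtain ⟨r, hrW⟩ := Finset.card_pos.1 (by omega : 0 < W.card)
    exact Finset.mem_biUnion.2 ⟨r, Finset.mem_univ r, Finset.mem_filter.2 ⟨hW, hrW⟩⟩
  refine le_trans (Finset.card_le_card hsub)
    (le_trans Finset.card_biUnion_le ?_)
  have hper : ∀ r : V, (𝒲.filter (fun W => r ∈ W)).card ≤ 4 ^ m * D ^ m := by
    intro r
    set F : Finset V → Tree Unit × (Fin m → Fin D) := fun W =>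
      if h : ∃ t : LTree D, t.numNodes = m ∧ insert r (LTree.decode e t r) = W
      then ((h.choose).shape, fun k => (h.choose).labels.getD k ⟨0, hD⟩)
      else (Tree.nil, fun _ => ⟨0, hD⟩) with hF
    have hexists : ∀ W ∈ 𝒲.filter (fun W => r ∈ W),
        ∃ t : LTree D, t.numNodes = m ∧ insert r (LTree.decode e t r) = W := by
      intro W hW
      obtain ⟨hW𝒲, hrW⟩ := Finset.mem_filter.1 hW
      obtain ⟨hWc, hWconn⟩ := h𝒲 W hW𝒲
      exact encode_exists e A hcov hirr m W r hrW hWc (hWconn r hrW)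
    have hle : (𝒲.filter (fun W => r ∈ W)).card ≤
        ((Tree.treesOfNumNodesEq m) ×ˢ (Finset.univ : Finset (Fin m → Fin D))).card := by
      apply Finset.card_le_card_of_injOn F
      · intro W hW
        have h := hexists W hW
        rw [hF]
        simp only [dif_pos h]
        refine Finset.mem_product.2 ⟨?_, Finset.mem_univ _⟩
        rw [BinaryTree.mem_treesOfNumNodesEq]
        exact (LTree.shape_numNodes _).trans h.choose_spec.1
      · intro W₁ hW₁ W₂ hW₂ hFeq
        have h₁ := hexists W₁ (by simpa using hW₁)
        have h₂ := hexists W₂ (by simpa using hW₂)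
        rw [hF] at hFeq
        simp only [dif_pos h₁, dif_pos h₂, Prod.mk.injEq] at hFeq
        obtain ⟨hshape, hlab⟩ := hFeq
        have hlen₁ : (h₁.choose).labels.length = m := by
          rw [LTree.labels_length]; exact h₁.choose_spec.1
        have hlen₂ : (h₂.choose).labels.length = m := by
          rw [LTree.labels_length]; exact h₂.choose_spec.1
        have hlabels : (h₁.choose).labels = (h₂.choose).labels := by
          apply List.ext_getElem (by rw [hlen₁, hlen₂])
          intro k hk1 hk2
          have hkm : k < m := by rwa [hlen₁] at hk1
          have := congrFun hlab ⟨k, hkm⟩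
          rwa [List.getD_eq_getElem _ _ hk1, List.getD_eq_getElem _ _ hk2] at this
        have ht : h₁.choose = h₂.choose :=
          LTree.eq_of_shape_of_labels hshape hlabels
        rw [← h₁.choose_spec.2, ← h₂.choose_spec.2, ht]
    refine le_trans hle ?_
    rw [Finset.card_product, BinaryTree.treesOfNumNodesEq_card_eq_catalan, Finset.card_univ,
      Fintype.card_fun, Fintype.card_fin, Fintype.card_fin]
    exact Nat.mul_le_mul_right _ (catalan_le_four_pow m)
  refine le_trans (Finset.sum_le_card_nsmul _ _ (4 ^ m * D ^ m)
    (fun r _ => hper r)) ?_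
  rw [Finset.card_univ, smul_eq_mul]

end ThreeTreeAux

open ThreeTreeAux
theorem prob_threeTree_all_events_le {V : Type*} [Fintype V] (G : SimpleGraph V)
    [DecidableRel G.Adj] (n d : ℕ) (hn : Fintype.card V = n) (hd : 1 ≤ d)
    (hdeg : ∀ v, G.degree v ≤ d)
    {Ω : Type*} [MeasurableSpace Ω] (μ : Measure Ω) [IsProbabilityMeasure μ]
    (B : V → Set Ω) (hB : ∀ v, MeasurableSet (B v))
    (p : ℝ≥0∞) (hp : ∀ v, μ (B v) ≤ p)
    (hcorr : ∀ W : Finset V, (∀ u ∈ W, ∀ v ∈ W, u ≠ v → 3 ≤ G.edist u v) →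
      μ (⋂ v ∈ W, B v) ≤ ∏ v ∈ W, μ (B v))
    (w : ℕ) (hw : 1 ≤ w) :
    μ {ω | ∃ W : Finset V, W.card = w ∧ IsThreeTree G W ∧ ∀ v ∈ W, ω ∈ B v}
      ≤ (n : ℝ≥0∞) * (4 * (d : ℝ≥0∞) ^ 3 * p) ^ w := by
  classical
  obtain ⟨m, rfl⟩ : ∃ m, w = m + 1 := ⟨w - 1, by omega⟩
  set A : V → V → Prop := fun a b => a ≠ b ∧ G.dist a b = 3 with hA
  have hirr : ∀ u, ¬ A u u := fun u h => h.1 rfl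
  -- degree bound for the distance-3 relation
  have hdegA : ∀ v : V, ∃ s : Finset V, (∀ u, A v u → u ∈ s) ∧ s.card ≤ d ^ 3 := by
    intro v
    refine ⟨(G.neighborFinset v).biUnion
      (fun a => (G.neighborFinset a).biUnion (fun b => G.neighborFinset b)), ?_, ?_⟩
    · rintro u ⟨hne, hdist⟩
      obtain ⟨q, hq⟩ := SimpleGraph.exists_walk_of_dist_ne_zero (by omega : G.dist v u ≠ 0)
      rw [hdist] at hq
      obtain ⟨a, b, h1, h2, h3⟩ : ∃ a b, G.Adj v a ∧ G.Adj a b ∧ G.Adj b u := by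
        cases q with
        | nil => simp at hq
        | cons h1 q1 =>
          cases q1 with
          | nil => simp at hq
          | cons h2 q2 =>
            cases q2 with
            | nil => simp at hq
            | cons h3 q3 =>
              cases q3 with
              | nil => exact ⟨_, _, h1, h2, h3⟩
              | cons h4 q4 => simp [SimpleGraph.Walk.length_cons] at hq
      refine Finset.mem_biUnion.2 ⟨a, ?_, Finset.mem_biUnion.2 ⟨b, ?_, ?_⟩⟩ <;>
        simp [SimpleGraph.mem_neighborFinset, h1, h2, h3]
    · have hone : ∀ a : V, (G.neighborFinset a).card ≤ d := by
        intro a; rw [SimpleGraph.card_neighborFinset_eq_degree]; exact hdeg a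
      have htwo : ∀ a : V,
          ((G.neighborFinset a).biUnion (fun b => G.neighborFinset b)).card ≤ d * d := by
        intro a
        refine le_trans Finset.card_biUnion_le ?_
        refine le_trans (Finset.sum_le_card_nsmul _ _ d (fun b _ => hone b)) ?_
        rw [smul_eq_mul]
        exact Nat.mul_le_mul_right _ (hone a)
      refine le_trans Finset.card_biUnion_le ?_
      refine le_trans (Finset.sum_le_card_nsmul _ _ (d * d) (fun a _ => htwo a)) ?_
      rw [smul_eq_mul]
      calc (G.neighborFinset v).card * (d * d) ≤ d * (d * d) :=
            Nat.mul_le_mul_right _ (hone v)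
        _ = d ^ 3 := by ring
  -- connectivity of a 3-tree gives chains for the relation `A`
  have hwalk : ∀ (W : Finset V) (x y : {v // v ∈ W}),
      (distThreeGraph G W).Walk x y →
      ∃ k, RTC (fun a b => b ∈ W ∧ A a b) x.1 y.1 k := by
    intro W x y q
    induction q with
    | nil => exact ⟨0, .refl⟩
    | @cons a b c hab q ih =>
      obtain ⟨k, hk⟩ := ih
      refine ⟨k + 1, RTC.head ?_ hk⟩
      rw [distThreeGraph, SimpleGraph.fromRel_adj] at hab
      obtain ⟨hne, hor⟩ := hab
      have hvalne : a.1 ≠ b.1 := fun h => hne (Subtype.ext h)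
      refine ⟨b.2, hvalne, ?_⟩
      rcases hor with h | h
      · exact h
      · rwa [SimpleGraph.dist_comm]
  set 𝒲 : Finset (Finset V) :=
    Finset.univ.filter (fun W => W.card = m + 1 ∧ IsThreeTree G W) with h𝒲
  have hset : {ω | ∃ W : Finset V, W.card = m + 1 ∧ IsThreeTree G W ∧ ∀ v ∈ W, ω ∈ B v}
      = ⋃ W ∈ 𝒲, ⋂ v ∈ W, (B v : Set Ω) := by
    ext ω
    simp only [Set.mem_setOf_eq, Set.mem_iUnion, Set.mem_iInter, h𝒲,
      Finset.mem_filter, Finset.mem_univ, true_and, exists_prop]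
    tauto
  have hcount : 𝒲.card ≤ Fintype.card V * (4 ^ m * (d ^ 3) ^ m) := by
    refine count_le A hirr (d ^ 3) (Nat.one_le_pow _ _ (by omega)) hdegA m 𝒲 ?_
    intro W hW
    obtain ⟨hWc, hWtt⟩ := (Finset.mem_filter.1 hW).2
    refine ⟨hWc, ?_⟩
    intro r hr u hu
    obtain ⟨q⟩ := hWtt.2.preconnected ⟨r, hr⟩ ⟨u, hu⟩
    exact hwalk W ⟨r, hr⟩ ⟨u, hu⟩ q
  have hstep : μ {ω | ∃ W : Finset V, W.card = m + 1 ∧ IsThreeTree G W ∧ ∀ v ∈ W, ω ∈ B v}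
      ≤ (𝒲.card : ℝ≥0∞) * p ^ (m + 1) := by
    rw [hset]
    refine le_trans (measure_biUnion_finset_le 𝒲 _) ?_
    have hWb : ∀ W ∈ 𝒲, μ (⋂ v ∈ W, B v) ≤ p ^ (m + 1) := by
      intro W hW
      obtain ⟨hWc, hWtt⟩ := (Finset.mem_filter.1 hW).2
      refine le_trans (hcorr W hWtt.1) ?_
      refine le_trans (Finset.prod_le_prod' (fun v _ => hp v)) ?_
      rw [Finset.prod_const, hWc]
    refine le_trans (Finset.sum_le_sum hWb) ?_
    rw [Finset.sum_const, nsmul_eq_mul]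
  refine le_trans hstep ?_
  have hc1 : (𝒲.card : ℝ≥0∞) ≤ (n : ℝ≥0∞) * (4 * (d : ℝ≥0∞) ^ 3) ^ m := by
    refine le_trans (Nat.cast_le.2 hcount) ?_
    rw [hn]
    push_cast
    rw [mul_pow]
  have hone : (1 : ℝ≥0∞) ≤ 4 * (d : ℝ≥0∞) ^ 3 := by
    have hd1 : (1 : ℝ≥0∞) ≤ (d : ℝ≥0∞) := by
      exact_mod_cast Nat.one_le_cast.2 hd
    calc (1 : ℝ≥0∞) ≤ 4 := by norm_num
      _ = 4 * 1 := by ring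
      _ ≤ 4 * (d : ℝ≥0∞) ^ 3 := by
          exact mul_le_mul_right (one_le_pow_of_one_le' hd1 3) 4
  calc (𝒲.card : ℝ≥0∞) * p ^ (m + 1)
      ≤ ((n : ℝ≥0∞) * (4 * (d : ℝ≥0∞) ^ 3) ^ m) * p ^ (m + 1) :=
        mul_le_mul_left hc1 _
    _ ≤ ((n : ℝ≥0∞) * (4 * (d : ℝ≥0∞) ^ 3) ^ (m + 1)) * p ^ (m + 1) := by
        refine mul_le_mul_left (mul_le_mul_right ?_ _) _
        exact pow_le_pow_right' hone (Nat.le_succ m)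
    _ = (n : ℝ≥0∞) * (4 * (d : ℝ≥0∞) ^ 3 * p) ^ (m + 1) := by
        rw [mul_pow, mul_pow]; ring
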